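/- arXiv:2107.06939 — 2 statements merged into one kernel-verified Lean document; each statement's English description precedes it below -/
import Mathlib

section
/- For real-valued random variables X₁ and X₂ defined on a common probability space with finite second moments, Var(max(X₁, X₂)) ≤ Var(X₁) + Var(X₂). -/
open MeasureTheory ProbabilityTheory

lemma variance_le_integral_sub_sq {Ω : Type*} [MeasurableSpace Ω] (P : Measure Ω)
    [IsProbabilityMeasure P] (Y : Ω → ℝ) (hY : MemLp Y 2 P) (c : ℝ) :
    variance Y P ≤ ∫ ω, (Y ω - c) ^ 2 ∂P := by
  set μ := ∫ ω, Y ω ∂P with hμ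
  have hint : Integrable Y P := hY.integrable (by norm_num)
  have hsq : Integrable (fun ω => (Y ω - μ) ^ 2) P := (hY.sub (memLp_const μ)).integrable_sq
  have hcross : Integrable (fun ω => 2 * (μ - c) * (Y ω - μ)) P :=
    ((hint.sub (integrable_const μ)).const_mul _)
  have hexp : ∀ ω, (Y ω - c) ^ 2 =
      (Y ω - μ) ^ 2 + 2 * (μ - c) * (Y ω - μ) + (μ - c) ^ 2 := by
    intro ω; ring
  have hvar : variance Y P = ∫ ω, (Y ω - μ) ^ 2 ∂P := variance_eq_integral hY.aestronglyMeasurable.aemeasurable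
  have hzero : ∫ ω, (Y ω - μ) ∂P = 0 := by
    rw [integral_sub hint (integrable_const μ), integral_const]
    simp [hμ]
  have key : ∫ ω, (Y ω - c) ^ 2 ∂P = ∫ ω, (Y ω - μ) ^ 2 ∂P + (μ - c) ^ 2 := by
    calc ∫ ω, (Y ω - c) ^ 2 ∂P
        = ∫ ω, ((Y ω - μ) ^ 2 + (2 * (μ - c) * (Y ω - μ) + (μ - c) ^ 2)) ∂P := by
          congr 1; funext ω; ring
      _ = ∫ ω, (Y ω - μ) ^ 2 ∂P + ∫ ω, (2 * (μ - c) * (Y ω - μ) + (μ - c) ^ 2) ∂P :=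
          integral_add hsq (hcross.add (integrable_const _))
      _ = ∫ ω, (Y ω - μ) ^ 2 ∂P + (μ - c) ^ 2 := by
          rw [integral_add hcross (integrable_const _), integral_const_mul, hzero,
            integral_const]
          simp
  rw [hvar, key]
  exact le_add_of_nonneg_right (sq_nonneg _)

/-- **Lemma C.2** (variance of a maximum).  For real-valued random variables `X₁`, `X₂` on
a common probability space with finite second moments,
`Var(max(X₁, X₂)) ≤ Var(X₁) + Var(X₂)`. -/
theorem variance_max_le {Ω : Type*} [MeasurableSpace Ω] (P : Measure Ω)
    [IsProbabilityMeasure P] (X₁ X₂ : Ω → ℝ)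
    (h₁ : MemLp X₁ 2 P) (h₂ : MemLp X₂ 2 P) :
    variance (fun ω => max (X₁ ω) (X₂ ω)) P ≤ variance X₁ P + variance X₂ P := by
  set μ₁ := ∫ ω, X₁ ω ∂P
  set μ₂ := ∫ ω, X₂ ω ∂P
  have hmax : MemLp (fun ω => max (X₁ ω) (X₂ ω)) 2 P := h₁.sup h₂
  have hsq₁ : Integrable (fun ω => (X₁ ω - μ₁) ^ 2) P :=
    (h₁.sub (memLp_const μ₁)).integrable_sq
  have hsq₂ : Integrable (fun ω => (X₂ ω - μ₂) ^ 2) P :=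
    (h₂.sub (memLp_const μ₂)).integrable_sq
  have hpt : ∀ ω, (max (X₁ ω) (X₂ ω) - max μ₁ μ₂) ^ 2 ≤
      (X₁ ω - μ₁) ^ 2 + (X₂ ω - μ₂) ^ 2 := by
    intro ω
    have h := abs_max_sub_max_le_max (X₁ ω) (X₂ ω) μ₁ μ₂
    have h2 : (max (X₁ ω) (X₂ ω) - max μ₁ μ₂) ^ 2 ≤ (max |X₁ ω - μ₁| |X₂ ω - μ₂|) ^ 2 := by
      rw [← sq_abs]
      exact pow_le_pow_left₀ (abs_nonneg _) h 2
    refine h2.trans ?_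
    rcases max_cases |X₁ ω - μ₁| |X₂ ω - μ₂| with ⟨he, _⟩ | ⟨he, _⟩ <;> rw [he, sq_abs] <;>
      [exact le_add_of_nonneg_right (sq_nonneg _); exact le_add_of_nonneg_left (sq_nonneg _)]
  calc variance (fun ω => max (X₁ ω) (X₂ ω)) P
      ≤ ∫ ω, (max (X₁ ω) (X₂ ω) - max μ₁ μ₂) ^ 2 ∂P :=
        variance_le_integral_sub_sq P _ hmax _
    _ ≤ ∫ ω, ((X₁ ω - μ₁) ^ 2 + (X₂ ω - μ₂) ^ 2) ∂P := by
        refine integral_mono ((hmax.sub (memLp_const _)).integrable_sq) (hsq₁.add hsq₂) hpt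
    _ = variance X₁ P + variance X₂ P := by
        rw [integral_add hsq₁ hsq₂, variance_eq_integral h₁.aestronglyMeasurable.aemeasurable,
          variance_eq_integral h₂.aestronglyMeasurable.aemeasurable]
end

section
/- One has m_*(s*)² ≤ n·τ_*(s*). That is, at sparsity s = s*, the squared minimum projected signal margin is bounded above by n times the identifiability margin. -/
open MeasureTheory ProbabilityTheory Real Finset
open scoped NNReal ENNReal

noncomputable section

namespace Paper

/-- The `j`-th column of `X` as a vector in Euclidean space. -/
def col {n p : ℕ} (X : Matrix (Fin n) (Fin p) ℝ) (j : Fin p) : EuclideanSpace ℝ (Fin n) :=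
  WithLp.toLp 2 (fun i => X i j)

/-- Column space of the submatrix `X_S`. -/
def colSpan {n p : ℕ} (X : Matrix (Fin n) (Fin p) ℝ) (S : Finset (Fin p)) :
    Submodule ℝ (EuclideanSpace ℝ (Fin n)) :=
  Submodule.span ℝ (col X '' (S : Set (Fin p)))

/-- Orthogonal projection of `ℝ^n` onto the column space of `X_S`. -/
def proj {n p : ℕ} (X : Matrix (Fin n) (Fin p) ℝ) (S : Finset (Fin p))
    (v : EuclideanSpace ℝ (Fin n)) : EuclideanSpace ℝ (Fin n) :=
  ((colSpan X S).orthogonalProjectionOnto v : EuclideanSpace ℝ (Fin n))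

/-- The marginal projection operator `P_{S₁|S₂} = P_{X_{S₁}} - P_{X_{S₁ ∩ S₂}}`. -/
def margProj {n p : ℕ} (X : Matrix (Fin n) (Fin p) ℝ) (S₁ S₂ : Finset (Fin p))
    (v : EuclideanSpace ℝ (Fin n)) : EuclideanSpace ℝ (Fin n) :=
  proj X S₁ v - proj X (S₁ ∩ S₂) v

/-- The true signal `μ* = X β*`. -/
def mu {n p : ℕ} (X : Matrix (Fin n) (Fin p) ℝ) (β : Fin p → ℝ) :
    EuclideanSpace ℝ (Fin n) :=
  WithLp.toLp 2 (fun i => ∑ j, X i j * β j)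

/-- `A(s)`: size-`s` models containing at least one false variable. -/
def bigA {p : ℕ} (Sstar : Finset (Fin p)) (s : ℕ) : Set (Finset (Fin p)) :=
  {S | S.card = s ∧ (S \ Sstar).Nonempty}

/-- `A*(s)`: size-`s` models with no false variable. -/
def bigAstar {p : ℕ} (Sstar : Finset (Fin p)) (s : ℕ) : Set (Finset (Fin p)) :=
  {S | S ⊆ Sstar ∧ S.card = s}

/-- `Φ` is an optimal feature swap at sparsity `s`. -/
def IsOptSwap {n p : ℕ} (X : Matrix (Fin n) (Fin p) ℝ) (β : Fin p → ℝ)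
    (Sstar : Finset (Fin p)) (s : ℕ) (Φ : Finset (Fin p) → Finset (Fin p)) : Prop :=
  ∀ S ∈ bigA Sstar s, Φ S ∈ bigAstar Sstar s ∧ S ∩ Sstar ⊆ Φ S ∧
    ∀ T ∈ bigAstar Sstar s, S ∩ Sstar ⊆ T →
      ‖proj X T (mu X β)‖ ≤ ‖proj X (Φ S) (mu X β)‖

/-- Projected signal margin `m(S)`. -/
def margin {n p : ℕ} (X : Matrix (Fin n) (Fin p) ℝ) (β : Fin p → ℝ)
    (Φ : Finset (Fin p) → Finset (Fin p)) (S : Finset (Fin p)) : ℝ :=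
  (‖margProj X (Φ S) S (mu X β)‖ - ‖margProj X S (Φ S) (mu X β)‖) /
    Real.sqrt ((Φ S \ S).card)

/-- Minimum projected signal margin `m_*(s)`. -/
def minMargin {n p : ℕ} (X : Matrix (Fin n) (Fin p) ℝ) (β : Fin p → ℝ)
    (Sstar : Finset (Fin p)) (Φ : Finset (Fin p) → Finset (Fin p)) (s : ℕ) : ℝ :=
  sInf (margin X β Φ '' bigA Sstar s)

/-- Residual sum of squares `L_S = yᵀ(I - P_{X_S})y`. -/
def lossL {n p : ℕ} (X : Matrix (Fin n) (Fin p) ℝ) (S : Finset (Fin p))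
    (y : EuclideanSpace ℝ (Fin n)) : ℝ :=
  ‖y - proj X S y‖ ^ 2

/-- `L_* = min_{|S| = s} L_S`. -/
def lossStar {n p : ℕ} (X : Matrix (Fin n) (Fin p) ℝ) (s : ℕ)
    (y : EuclideanSpace ℝ (Fin n)) : ℝ :=
  sInf {l | ∃ S : Finset (Fin p), S.card = s ∧ l = lossL X S y}

/-- The collection `𝕊(s, η)` of near best `s`-subsets, given a realization `y`. -/
def nearBest {n p : ℕ} (X : Matrix (Fin n) (Fin p) ℝ) (β : Fin p → ℝ)
    (Sstar : Finset (Fin p)) (Φ : Finset (Fin p) → Finset (Fin p)) (s : ℕ) (η : ℝ)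
    (y : EuclideanSpace ℝ (Fin n)) : Set (Finset (Fin p)) :=
  {S | S.card = s ∧ lossL X S y ≤ lossStar X s y + η * (minMargin X β Sstar Φ s) ^ 2}

/-- False discovery proportion. -/
def fdp {p : ℕ} (Sstar S : Finset (Fin p)) : ℝ :=
  ((S \ Sstar).card : ℝ) / max (S.card : ℝ) 1

/-- `A(s*)`: size-`s*` models different from `S*` (equivalently, containing at least one
false variable). -/
def bigAtop {p : ℕ} (Sstar : Finset (Fin p)) : Set (Finset (Fin p)) :=
  {S | S.card = Sstar.card ∧ S ≠ Sstar}

/-- The projected signal margin at sparsity `s = s*`, where the optimal feature swap is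
`Φ(S) = S*`. -/
def marginTop {n p : ℕ} (X : Matrix (Fin n) (Fin p) ℝ) (β : Fin p → ℝ)
    (Sstar S : Finset (Fin p)) : ℝ :=
  (‖margProj X Sstar S (mu X β)‖ - ‖margProj X S Sstar (mu X β)‖) /
    Real.sqrt ((Sstar \ S).card)

/-- The identifiability margin `τ_*(s*)` of Guo et al. -/
def tauStar {n p : ℕ} (X : Matrix (Fin n) (Fin p) ℝ) (β : Fin p → ℝ)
    (Sstar : Finset (Fin p)) : ℝ :=
  sInf ((fun S => (‖mu X β‖ ^ 2 - ‖proj X S (mu X β)‖ ^ 2) /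
    ((n : ℝ) * ((Sstar \ S).card : ℝ))) '' bigAtop Sstar)

open scoped RealInnerProductSpace in
lemma pyth {n : ℕ} (K : Submodule ℝ (EuclideanSpace ℝ (Fin n)))
    (v : EuclideanSpace ℝ (Fin n)) :
    ‖v - (K.orthogonalProjectionOnto v : EuclideanSpace ℝ (Fin n))‖ ^ 2
      = ‖v‖ ^ 2 - ‖(K.orthogonalProjectionOnto v : EuclideanSpace ℝ (Fin n))‖ ^ 2 := by
  set w : EuclideanSpace ℝ (Fin n) := (K.orthogonalProjectionOnto v : EuclideanSpace ℝ (Fin n))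
  have hi : (inner ℝ w (v - w) : ℝ) = 0 := by
    have hm := Submodule.sub_starProjection_mem_orthogonal (K := K) v
    rw [Submodule.starProjection_apply] at hm
    exact (Submodule.mem_orthogonal K (v - w)).mp hm w (K.orthogonalProjectionOnto v).2
  have h := norm_add_sq_real w (v - w)
  have hv : w + (v - w) = v := by abel
  rw [hv, hi] at h
  ring_nf at h ⊢
  linarith

lemma colSpan_mono {n p : ℕ} (X : Matrix (Fin n) (Fin p) ℝ) {S T : Finset (Fin p)}
    (h : S ⊆ T) : colSpan X S ≤ colSpan X T := by
  apply Submodule.span_mono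
  exact Set.image_mono (by exact_mod_cast h)

lemma mu_mem {n p : ℕ} (X : Matrix (Fin n) (Fin p) ℝ) (β : Fin p → ℝ)
    (Sstar : Finset (Fin p)) (hsupp : ∀ j, j ∈ Sstar ↔ β j ≠ 0) :
    mu X β ∈ colSpan X Sstar := by
  have hmu : mu X β = ∑ j ∈ Sstar, β j • col X j := by
    ext i
    have : (∑ j ∈ Sstar, β j • col X j) i = ∑ j ∈ Sstar, β j * X i j := by
      clear hsupp
      induction Sstar using Finset.induction with
      | empty => rfl
      | insert _ _ h ih =>
        rw [Finset.sum_insert h, Finset.sum_insert h, ← ih]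
        rfl
    rw [this]
    show ∑ j, X i j * β j = _
    rw [← Finset.sum_subset (Finset.subset_univ Sstar)
      (fun j _ hj => by
        have : β j = 0 := by
          by_contra hb; exact hj ((hsupp j).mpr hb)
        simp [this])]
    exact Finset.sum_congr rfl fun j _ => mul_comm _ _
  rw [hmu]
  exact Submodule.sum_mem _ fun j hj =>
    Submodule.smul_mem _ _ (Submodule.subset_span ⟨j, by simpa using hj, rfl⟩)

lemma key_eq {n p : ℕ} (X : Matrix (Fin n) (Fin p) ℝ) (β : Fin p → ℝ)
    (Sstar : Finset (Fin p)) (hsupp : ∀ j, j ∈ Sstar ↔ β j ≠ 0) (S : Finset (Fin p)) :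
    ‖margProj X Sstar S (mu X β)‖ ^ 2 - ‖margProj X S Sstar (mu X β)‖ ^ 2
      = ‖mu X β‖ ^ 2 - ‖proj X S (mu X β)‖ ^ 2 := by
  set μ := mu X β with hμ
  have hproj : proj X Sstar μ = μ := by
    rw [proj, ← Submodule.starProjection_apply]
    exact Submodule.starProjection_eq_self_iff.mpr (mu_mem X β Sstar hsupp)
  have ha : ‖margProj X Sstar S μ‖ ^ 2 = ‖μ‖ ^ 2 - ‖proj X (Sstar ∩ S) μ‖ ^ 2 := by
    rw [margProj, hproj]
    exact pyth (colSpan X (Sstar ∩ S)) μ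
  have hcomp : proj X (S ∩ Sstar) μ = proj X (S ∩ Sstar) (proj X S μ) := by
    unfold proj
    rw [← Submodule.starProjection_apply (colSpan X S) μ,
      Submodule.orthogonalProjectionOnto_starProjection_of_le
      (colSpan_mono X (Finset.inter_subset_left)) μ]
  have hb : ‖margProj X S Sstar μ‖ ^ 2
      = ‖proj X S μ‖ ^ 2 - ‖proj X (S ∩ Sstar) μ‖ ^ 2 := by
    rw [margProj, hcomp]
    exact pyth (colSpan X (S ∩ Sstar)) (proj X S μ)
  rw [ha, hb, Finset.inter_comm S Sstar]
  ring

/-- The squared minimum projected signal margin at `s = s*` is bounded by `n` times the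
identifiability margin: `m_*(s*)² ≤ n τ_*(s*)`. -/
theorem minMargin_sq_le_tauStar {n p : ℕ} (X : Matrix (Fin n) (Fin p) ℝ)
    (β : Fin p → ℝ) (Sstar : Finset (Fin p))
    (hsupp : ∀ j, j ∈ Sstar ↔ β j ≠ 0) (hsn : Sstar.card < n) :
    (sInf (marginTop X β Sstar '' bigAtop Sstar)) ^ 2 ≤ (n : ℝ) * tauStar X β Sstar := by
  classical
  have hn : (0 : ℝ) < n := by exact_mod_cast (Nat.zero_le _).trans_lt hsn
  set f : Finset (Fin p) → ℝ := fun S =>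
    (‖mu X β‖ ^ 2 - ‖proj X S (mu X β)‖ ^ 2) / ((n : ℝ) * ((Sstar \ S).card : ℝ)) with hf
  have hcard : ∀ S ∈ bigAtop Sstar, (0 : ℝ) < ((Sstar \ S).card : ℝ) := by
    intro S hS
    obtain ⟨hc, hne⟩ := hS
    have : (Sstar \ S).Nonempty := by
      rw [Finset.sdiff_nonempty]
      intro hsub
      exact hne (Finset.eq_of_subset_of_card_le hsub (le_of_eq hc)).symm
    exact_mod_cast Finset.card_pos.mpr this
  have hD : ∀ S : Finset (Fin p), 0 ≤ ‖mu X β‖ ^ 2 - ‖proj X S (mu X β)‖ ^ 2 := by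
    intro S
    have h : ‖mu X β - proj X S (mu X β)‖ ^ 2
        = ‖mu X β‖ ^ 2 - ‖proj X S (mu X β)‖ ^ 2 := pyth (colSpan X S) (mu X β)
    nlinarith [sq_nonneg ‖mu X β - proj X S (mu X β)‖]
  have hab : ∀ S ∈ bigAtop Sstar,
      ‖margProj X S Sstar (mu X β)‖ ≤ ‖margProj X Sstar S (mu X β)‖ := by
    intro S _
    have hk := key_eq X β Sstar hsupp S
    have := hD S
    have h2 : ‖margProj X S Sstar (mu X β)‖ ^ 2
        ≤ ‖margProj X Sstar S (mu X β)‖ ^ 2 := by linarith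
    exact le_of_pow_le_pow_left₀ two_ne_zero (norm_nonneg _) h2
  have hm_nonneg : ∀ S ∈ bigAtop Sstar, 0 ≤ marginTop X β Sstar S := by
    intro S hS
    apply div_nonneg
    · linarith [hab S hS]
    · exact Real.sqrt_nonneg _
  have hpt : ∀ S ∈ bigAtop Sstar, (marginTop X β Sstar S) ^ 2 ≤ (n : ℝ) * f S := by
    intro S hS
    have hc := hcard S hS
    have hk := key_eq X β Sstar hsupp S
    have hba := hab S hS
    have hb0 : (0 : ℝ) ≤ ‖margProj X S Sstar (mu X β)‖ := norm_nonneg _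
    have hsq : (marginTop X β Sstar S) ^ 2
        = (‖margProj X Sstar S (mu X β)‖ - ‖margProj X S Sstar (mu X β)‖) ^ 2
          / ((Sstar \ S).card : ℝ) := by
      rw [marginTop, div_pow, Real.sq_sqrt (by positivity)]
    rw [hsq, hf]
    have h2 : (n : ℝ) * ((‖mu X β‖ ^ 2 - ‖proj X S (mu X β)‖ ^ 2)
          / ((n : ℝ) * ((Sstar \ S).card : ℝ)))
        = (‖mu X β‖ ^ 2 - ‖proj X S (mu X β)‖ ^ 2) / ((Sstar \ S).card : ℝ) := by
      field_simp
    rw [h2]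
    have h1 : (‖margProj X Sstar S (mu X β)‖ - ‖margProj X S Sstar (mu X β)‖) ^ 2
        ≤ ‖mu X β‖ ^ 2 - ‖proj X S (mu X β)‖ ^ 2 := by
      nlinarith [mul_nonneg hb0 (sub_nonneg.mpr hba)]
    gcongr
  -- now handle the infima
  rcases Set.eq_empty_or_nonempty (bigAtop Sstar) with hA | hA
  · rw [tauStar, hA]
    simp [Real.sInf_empty]
  · set M := marginTop X β Sstar '' bigAtop Sstar with hM
    have hMne : M.Nonempty := hA.image _
    have hM0 : ∀ x ∈ M, 0 ≤ x := by
      rintro x ⟨S, hS, rfl⟩; exact hm_nonneg S hS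
    have hbdd : BddBelow M := ⟨0, fun x hx => hM0 x hx⟩
    have hInf0 : 0 ≤ sInf M := le_csInf hMne hM0
    have hkey : ∀ S ∈ bigAtop Sstar, (sInf M) ^ 2 / (n : ℝ) ≤ f S := by
      intro S hS
      rw [div_le_iff₀ hn]
      have h1 : sInf M ≤ marginTop X β Sstar S := csInf_le hbdd ⟨S, hS, rfl⟩
      have h2 : (sInf M) ^ 2 ≤ (marginTop X β Sstar S) ^ 2 :=
        pow_le_pow_left₀ hInf0 h1 2
      calc (sInf M) ^ 2 ≤ (n : ℝ) * f S := le_trans h2 (hpt S hS)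
        _ = f S * (n : ℝ) := mul_comm _ _
    have hτ : (sInf M) ^ 2 / (n : ℝ) ≤ tauStar X β Sstar := by
      apply le_csInf (hA.image _)
      rintro x ⟨S, hS, rfl⟩
      exact hkey S hS
    calc (sInf M) ^ 2 = (n : ℝ) * ((sInf M) ^ 2 / (n : ℝ)) := by field_simp
      _ ≤ (n : ℝ) * tauStar X β Sstar := mul_le_mul_of_nonneg_left hτ hn.le

end Paper
end
end
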